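/- arXiv:2012.04345 — 5 statements merged into one kernel-verified Lean document; each statement's English description precedes it below -/
import Mathlib

section
/- Let D ∈ ℝ^{m×k d̂} have blocks D^{(1)},…,D^{(k)} ∈ ℝ^{m×d̂}, let l ∈ [k], and suppose that for every j ≠ l and every nonzero vector u ∈ ℝ^{d̂}, the minimum-Euclidean-norm minimizer α of ‖D^{(l)}α − D^{(j)}u‖ satisfies ‖α‖ < ‖u‖ (i.e. ‖D^{(l)†}D^{(j)}‖_2 < 1 in terms of the Moore–Penrose pseudoinverse). Suppose x = Σ_{j=1}^k D^{(j)} c^{(j)} for vectors c^{(j)} ∈ ℝ^{d̂}, and that x lies in the column space of D^{(l)}. Then there exists α ∈ ℝ^{d̂} with D^{(l)}α = x and ‖α‖ ≤ Σ_{j=1}^k ‖c^{(j)}‖; moreover, if c^{(j)} ≠ 0 for some j ≠ l, one can choose α with ‖α‖ < Σ_{j=1}^k ‖c^{(j)}‖. -/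
open Matrix Finset

noncomputable def vnorm {p : ℕ} (v : Fin p → ℝ) : ℝ := Real.sqrt (∑ i, v i ^ 2)

/-- `α` is a minimum-Euclidean-norm minimizer of `β ↦ ‖Aβ − b‖`. -/
def IsMinNormSol {m p : ℕ} (A : Matrix (Fin m) (Fin p) ℝ) (b : Fin m → ℝ)
    (α : Fin p → ℝ) : Prop :=
  (∀ β, vnorm (A.mulVec α - b) ≤ vnorm (A.mulVec β - b)) ∧
  (∀ β, (∀ γ, vnorm (A.mulVec β - b) ≤ vnorm (A.mulVec γ - b)) → vnorm α ≤ vnorm β)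

noncomputable def toE {p : ℕ} (v : Fin p → ℝ) : EuclideanSpace ℝ (Fin p) := WithLp.toLp 2 v

lemma vnorm_eq_norm {p : ℕ} (v : Fin p → ℝ) : vnorm v = ‖toE v‖ := by
  rw [EuclideanSpace.norm_eq]
  simp [vnorm, toE, Real.norm_eq_abs, sq_abs]

lemma inner_toE {p : ℕ} (u v : Fin p → ℝ) : (inner ℝ (toE u) (toE v) : ℝ) = u ⬝ᵥ v := by
  simp [toE, PiLp.inner_apply, dotProduct, RCLike.inner_apply, mul_comm]

lemma exists_minNormSol (m p : ℕ) (A : Matrix (Fin m) (Fin p) ℝ) (b : Fin m → ℝ) :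
    ∃ α : Fin p → ℝ, IsMinNormSol A b α ∧
      ∀ γ : Fin p → ℝ, (A.mulVec γ) ⬝ᵥ (A.mulVec α - b) = 0 := by
  classical
  let F : EuclideanSpace ℝ (Fin p) →ₗ[ℝ] EuclideanSpace ℝ (Fin m) :=
    { toFun := fun v => toE (A.mulVec v)
      map_add' := fun u v => by
        show toE (A.mulVec (u + v)) = toE (A.mulVec u) + toE (A.mulVec v)
        ext i
        simp [toE, Matrix.mulVec, dotProduct, mul_add, Finset.sum_add_distrib]
      map_smul' := fun r v => by
        show toE (A.mulVec (r • v)) = r • toE (A.mulVec v)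
        ext i
        simp [toE, Matrix.mulVec, dotProduct, Finset.mul_sum, smul_eq_mul]
        exact Finset.sum_congr rfl fun j _ => by ring }
  set K : Submodule ℝ (EuclideanSpace ℝ (Fin m)) := LinearMap.range F with hKdef
  set pb : EuclideanSpace ℝ (Fin m) := (K.orthogonalProjectionOnto (toE b) : EuclideanSpace ℝ (Fin m)) with hpbdef
  obtain ⟨β₀, hβ₀⟩ : ∃ β₀, F β₀ = pb := Submodule.coe_mem (K.orthogonalProjectionOnto (toE b))
  have hpb_mem : pb ∈ K := ⟨β₀, hβ₀⟩
  set N : Submodule ℝ (EuclideanSpace ℝ (Fin p)) := LinearMap.ker F with hNdef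
  set α₀ : EuclideanSpace ℝ (Fin p) := β₀ - (N.orthogonalProjectionOnto β₀ : EuclideanSpace ℝ (Fin p)) with hα₀def
  have hα₀_perp : α₀ ∈ Nᗮ := Submodule.sub_starProjection_mem_orthogonal (K := N) β₀
  have hFα₀ : F α₀ = pb := by
    have hmem : (N.orthogonalProjectionOnto β₀ : EuclideanSpace ℝ (Fin p)) ∈ N := Submodule.coe_mem _
    rw [hα₀def, map_sub, LinearMap.mem_ker.mp hmem, sub_zero, hβ₀]
  have hb_perp : toE b - pb ∈ Kᗮ := Submodule.sub_starProjection_mem_orthogonal (K := K) (toE b)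
  have hres_perp : F α₀ - toE b ∈ Kᗮ := by
    rw [hFα₀]
    have := Kᗮ.neg_mem hb_perp
    simpa [neg_sub] using this
  -- Pythagoras for the residual
  have pyth : ∀ β : EuclideanSpace ℝ (Fin p),
      ‖F β - toE b‖ ^ 2 = ‖F β - pb‖ ^ 2 + ‖pb - toE b‖ ^ 2 := by
    intro β
    have hdecomp : F β - toE b = (F β - pb) + (pb - toE b) := by abel
    have horth : (inner ℝ (F β - pb) (pb - toE b) : ℝ) = 0 := by
      have h1 : F β - pb ∈ K := K.sub_mem (LinearMap.mem_range_self F β) hpb_mem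
      have h2 : pb - toE b ∈ Kᗮ := by
        have := Kᗮ.neg_mem hb_perp
        simpa [neg_sub] using this
      exact Submodule.inner_right_of_mem_orthogonal h1 h2
    rw [hdecomp, norm_add_sq_real, horth]
    ring
  have hmin : ∀ β : EuclideanSpace ℝ (Fin p), ‖F α₀ - toE b‖ ≤ ‖F β - toE b‖ := by
    intro β
    have h2 := pyth β
    have h1 : ‖F α₀ - toE b‖ = ‖pb - toE b‖ := by rw [hFα₀]
    rw [h1]
    nlinarith [norm_nonneg (F β - toE b), norm_nonneg (pb - toE b), sq_nonneg ‖F β - pb‖]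
  have hvnF : ∀ v : Fin p → ℝ, vnorm (A.mulVec v - b) = ‖F (toE v) - toE b‖ := by
    intro v
    rw [vnorm_eq_norm]
    rfl
  refine ⟨α₀, ⟨?_, ?_⟩, ?_⟩
  · intro β
    rw [hvnF α₀, hvnF β]
    exact hmin (toE β)
  · intro β hβmin
    have hβle : ‖F (toE β) - toE b‖ ≤ ‖pb - toE b‖ := by
      have h := hβmin α₀
      have h5 : F (toE α₀) = pb := hFα₀
      rw [hvnF β, hvnF α₀, h5] at h
      exact h
    have hFβ : F (toE β) = pb := by
      have h2 := pyth (toE β)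
      have h3 : ‖F (toE β) - pb‖ ^ 2 ≤ 0 := by
        nlinarith [norm_nonneg (F (toE β) - toE b), norm_nonneg (pb - toE b)]
      have h4 : ‖F (toE β) - pb‖ = 0 := by
        nlinarith [norm_nonneg (F (toE β) - pb)]
      exact sub_eq_zero.mp (norm_eq_zero.mp h4)
    have hker : toE β - α₀ ∈ N := by
      rw [hNdef, LinearMap.mem_ker, map_sub, hFβ, hFα₀, sub_self]
    have horth : (inner ℝ (toE β - α₀) α₀ : ℝ) = 0 := by
      have := Submodule.inner_right_of_mem_orthogonal hker hα₀_perp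
      exact this
    have hsq : ‖toE β‖ ^ 2 = ‖α₀‖ ^ 2 + ‖toE β - α₀‖ ^ 2 := by
      have hdec : toE β = α₀ + (toE β - α₀) := by abel
      have horth2 : (inner ℝ α₀ (toE β - α₀) : ℝ) = 0 := by
        rw [real_inner_comm]; exact horth
      calc ‖toE β‖ ^ 2 = ‖α₀ + (toE β - α₀)‖ ^ 2 := by rw [← hdec]
        _ = ‖α₀‖ ^ 2 + 2 * (inner ℝ α₀ (toE β - α₀) : ℝ) + ‖toE β - α₀‖ ^ 2 := norm_add_sq_real _ _
        _ = ‖α₀‖ ^ 2 + ‖toE β - α₀‖ ^ 2 := by rw [horth2]; ring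
    have : ‖α₀‖ ≤ ‖toE β‖ := by
      nlinarith [norm_nonneg (toE β), norm_nonneg α₀, sq_nonneg ‖toE β - α₀‖]
    rw [vnorm_eq_norm, vnorm_eq_norm]
    exact this
  · intro γ
    have h1 : F (toE γ) ∈ K := LinearMap.mem_range_self F _
    have h3 : (inner ℝ (F (toE γ)) (F α₀ - toE b) : ℝ) = 0 :=
      Submodule.inner_right_of_mem_orthogonal h1 hres_perp
    have h4 : (inner ℝ (toE (A.mulVec γ)) (toE (A.mulVec α₀ - b)) : ℝ) = 0 := h3
    rwa [inner_toE] at h4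

/-- If `‖D^{(l)†} D^{(j)}‖_2 < 1` for all `j ≠ l` (expressed via minimum-norm solutions),
`x = Σ_j D^{(j)} c^{(j)}` and `x` lies in the column space of `D^{(l)}`, then `x = D^{(l)} α`
for some `α` with `‖α‖ ≤ Σ_j ‖c^{(j)}‖`, strictly if `c^{(j)} ≠ 0` for some `j ≠ l`. -/
theorem min_norm_representation_in_one_block
    (m k dh : ℕ)
    (D : Fin k → Matrix (Fin m) (Fin dh) ℝ) (l : Fin k)
    (hD : ∀ j, j ≠ l → ∀ u : Fin dh → ℝ, u ≠ 0 → ∀ α : Fin dh → ℝ,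
        IsMinNormSol (D l) ((D j).mulVec u) α → vnorm α < vnorm u)
    (x : Fin m → ℝ) (c : Fin k → Fin dh → ℝ)
    (hx : x = ∑ j, (D j).mulVec (c j))
    (hcolspace : ∃ β : Fin dh → ℝ, (D l).mulVec β = x) :
    (∃ α : Fin dh → ℝ, (D l).mulVec α = x ∧ vnorm α ≤ ∑ j, vnorm (c j)) ∧
    ((∃ j, j ≠ l ∧ c j ≠ 0) →
      ∃ α : Fin dh → ℝ, (D l).mulVec α = x ∧ vnorm α < ∑ j, vnorm (c j)) := by
  classical
  obtain ⟨β, hβ⟩ := hcolspace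
  choose g hg1 hg2 using fun j : Fin k => exists_minNormSol m dh (D l) ((D j).mulVec (c j))
  set g' : Fin k → Fin dh → ℝ := fun j => if j = l then c l else g j with hg'def
  set α : Fin dh → ℝ := ∑ j, g' j with hαdef
  have hvn0 : vnorm (0 : Fin dh → ℝ) = 0 := by simp [vnorm]
  have hvn_nonneg : ∀ {q : ℕ} (v : Fin q → ℝ), 0 ≤ vnorm v := fun v => Real.sqrt_nonneg _
  have hle : ∀ j, vnorm (g' j) ≤ vnorm (c j) := by
    intro j
    by_cases hjl : j = l
    · simp [hg'def, hjl]
    · simp only [hg'def, if_neg hjl]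
      by_cases hcj : c j = 0
      · have h0min : ∀ γ, vnorm ((D l).mulVec (0 : Fin dh → ℝ) - (D j).mulVec (c j)) ≤
            vnorm ((D l).mulVec γ - (D j).mulVec (c j)) := by
          intro γ
          have h00 : (D l).mulVec (0 : Fin dh → ℝ) - (D j).mulVec (c j) = 0 := by
            simp [hcj, Matrix.mulVec_zero]
          have hvn0m : vnorm (0 : Fin m → ℝ) = 0 := by simp [vnorm]
          rw [h00, hvn0m]
          exact hvn_nonneg _
        have hminz := (hg1 j).2 0 h0min
        rw [hvn0] at hminz
        rw [hcj, hvn0]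
        exact hminz
      · exact le_of_lt (hD j hjl (c j) hcj (g j) (hg1 j))
  have hlt : ∀ j, j ≠ l → c j ≠ 0 → vnorm (g' j) < vnorm (c j) := by
    intro j hjl hcj
    simp only [hg'def, if_neg hjl]
    exact hD j hjl (c j) hcj (g j) (hg1 j)
  have hmulsum : (D l).mulVec α = ∑ j, (D l).mulVec (g' j) := by
    rw [hαdef]
    exact map_sum ((D l).mulVecLin) g' univ
  have hDlα : (D l).mulVec α = x := by
    set w : Fin dh → ℝ := β - α with hwdef
    have hw : (D l).mulVec w = x - (D l).mulVec α := by
      rw [hwdef, Matrix.mulVec_sub, hβ]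
    have hrsum : x - (D l).mulVec α = ∑ j, ((D j).mulVec (c j) - (D l).mulVec (g' j)) := by
      rw [hx, hmulsum, ← Finset.sum_sub_distrib]
    have hsum_eq : (D l).mulVec w = ∑ j, ((D j).mulVec (c j) - (D l).mulVec (g' j)) :=
      hw.trans hrsum
    have hdot2 : (D l).mulVec w ⬝ᵥ (∑ j, ((D j).mulVec (c j) - (D l).mulVec (g' j))) = 0 := by
      have hexp : (D l).mulVec w ⬝ᵥ (∑ j, ((D j).mulVec (c j) - (D l).mulVec (g' j)))
          = ∑ j, (D l).mulVec w ⬝ᵥ ((D j).mulVec (c j) - (D l).mulVec (g' j)) := by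
        simpa using map_sum (AddMonoidHom.mk' (dotProduct ((D l).mulVec w))
          (fun a b => dotProduct_add _ a b))
          (fun j => (D j).mulVec (c j) - (D l).mulVec (g' j)) Finset.univ
      rw [hexp]
      refine Finset.sum_eq_zero fun j _ => ?_
      by_cases hjl : j = l
      · subst hjl
        simp [hg'def]
      · have hperp := hg2 j w
        simp only [hg'def, if_neg hjl]
        rw [← neg_sub ((D l).mulVec (g j)) ((D j).mulVec (c j)), dotProduct_neg,
          hperp, neg_zero]
    have hdot : (D l).mulVec w ⬝ᵥ (D l).mulVec w = 0 := by
      rw [congrArg (fun v => (D l).mulVec w ⬝ᵥ v) hsum_eq]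
      exact hdot2
    have hwzero : (D l).mulVec w = 0 := dotProduct_self_eq_zero.mp hdot
    have hxα : x - (D l).mulVec α = 0 := hw.symm.trans hwzero
    have := sub_eq_zero.mp hxα
    exact this.symm
  have htoEsum : toE α = ∑ j, toE (g' j) := WithLp.toLp_sum _ _ _ _
  have hαle : vnorm α ≤ ∑ j, vnorm (g' j) := by
    rw [vnorm_eq_norm, htoEsum]
    calc ‖∑ j, toE (g' j)‖ ≤ ∑ j, ‖toE (g' j)‖ := norm_sum_le _ _
      _ = ∑ j, vnorm (g' j) := by
          exact Finset.sum_congr rfl fun j _ => (vnorm_eq_norm (g' j)).symm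
  refine ⟨⟨α, hDlα, hαle.trans (Finset.sum_le_sum fun j _ => hle j)⟩, ?_⟩
  rintro ⟨j₀, hj₀l, hcj₀⟩
  have hstrict : ∑ j, vnorm (g' j) < ∑ j, vnorm (c j) :=
    Finset.sum_lt_sum (fun j _ => hle j) ⟨j₀, Finset.mem_univ _, hlt j₀ hj₀l hcj₀⟩
  exact ⟨α, hDlα, lt_of_le_of_lt hαle hstrict⟩
end

section
/- Let U be a linear subspace of ℝ^m and x ∈ U. Let D = [D_1, D_2] ∈ ℝ^{m×d̂} with D_1 ∈ ℝ^{m×p} and 1 ≤ p ≤ d̂ − 1, where every column of D has Euclidean norm at most 1 and every column of D_1 lies in U. Let α = (α'; 0) ∈ ℝ^{d̂} with α' ∈ ℝ^p, D_1 α' = x, and α'_p ≠ 0. Let δ be the p-th column of D_1, define D̄ = [D_1, δ, δ, …, δ] ∈ ℝ^{m×d̂} (the last d̂ − p columns all equal to δ), and define ᾱ = (α'_1, …, α'_{p−1}, α'_p/(d̂−p+1), …, α'_p/(d̂−p+1)) ∈ ℝ^{d̂} (the last d̂ − p + 1 entries all equal to α'_p/(d̂−p+1)). Then every column of D̄ lies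 in U and has Euclidean norm at most 1, D̄ ᾱ = x, and ‖ᾱ‖ < ‖α‖. -/
open Matrix Finset

/-- Lemma 2 construction: replacing the columns of `D` outside `D_1` by copies of the
`p`-th column `δ` of `D_1`, and spreading the `p`-th coefficient over the repeated
columns, keeps all columns in `U` with norm at most 1, reconstructs `x`, and strictly
decreases the Euclidean norm of the coefficient vector. -/
theorem spreading_coefficient_decreases_norm
    (m dh p : ℕ)
    (U : Submodule ℝ (Fin m → ℝ)) (x : Fin m → ℝ) (hx : x ∈ U)
    (D : Matrix (Fin m) (Fin dh) ℝ)
    (hp1 : 1 ≤ p) (hpd : p ≤ dh - 1)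
    (hDnorm : ∀ j, vnorm (fun i => D i j) ≤ 1)
    (hD1U : ∀ j : Fin dh, (j : ℕ) < p → (fun i => D i j) ∈ U)
    (α : Fin dh → ℝ)
    (hα0 : ∀ j : Fin dh, p ≤ (j : ℕ) → α j = 0)
    (hDα : D.mulVec α = x)
    (pidx : Fin dh) (hpidx : (pidx : ℕ) = p - 1)
    (hαp : α pidx ≠ 0)
    (Dbar : Matrix (Fin m) (Fin dh) ℝ)
    (hDbar : ∀ i j, Dbar i j = if (j : ℕ) < p then D i j else D i pidx)
    (abar : Fin dh → ℝ)
    (habar : ∀ j : Fin dh,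
        abar j = if (j : ℕ) < p - 1 then α j else α pidx / ((dh - p + 1 : ℕ) : ℝ)) :
    (∀ j, (fun i => Dbar i j) ∈ U ∧ vnorm (fun i => Dbar i j) ≤ 1) ∧
    Dbar.mulVec abar = x ∧ vnorm abar < vnorm α := by
  classical
  have hdh : 0 < dh := pidx.pos
  have hpdh : p < dh := by omega
  have hkpos : 0 < dh - p + 1 := by omega
  have hkR : (2:ℝ) ≤ ((dh - p + 1 : ℕ) : ℝ) := by
    have : 2 ≤ dh - p + 1 := by omega
    exact_mod_cast this
  have hkR0 : (0:ℝ) < ((dh - p + 1 : ℕ) : ℝ) := by positivity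
  have hppidx : (pidx : ℕ) < p := by omega
  set S : Finset (Fin dh) := univ.filter (fun j => (j:ℕ) < p - 1) with hS
  set T : Finset (Fin dh) := univ.filter (fun j => ¬ (j:ℕ) < p - 1) with hT
  have hsplit : ∀ g : Fin dh → ℝ, ∑ j, g j = ∑ j ∈ S, g j + ∑ j ∈ T, g j :=
    fun g => (Finset.sum_filter_add_sum_filter_not univ _ g).symm
  have hpidxT : pidx ∈ T := by
    simp only [hT, Finset.mem_filter, Finset.mem_univ, true_and, hpidx]
    omega
  have hScard : S.card = p - 1 := by
    have : S = Finset.Iio pidx := by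
      ext j; simp [hS, Finset.mem_Iio, Fin.lt_def, hpidx]
    rw [this, Fin.card_Iio, hpidx]
  have hTcard : T.card = dh - p + 1 := by
    have h1 := Finset.card_filter_add_card_filter_not
      (s := (univ : Finset (Fin dh))) (p := fun j => (j:ℕ) < p - 1)
    rw [← hS, ← hT] at h1
    simp only [Finset.card_univ, Fintype.card_fin] at h1
    omega
  have hTeq : ∀ j ∈ T, j ≠ pidx → p ≤ (j:ℕ) := by
    intro j hj hne
    simp only [hT, Finset.mem_filter] at hj
    have : (j:ℕ) ≠ p - 1 := fun h => hne (Fin.ext (by rw [h, hpidx]))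
    omega
  refine ⟨?_, ?_, ?_⟩
  · intro j
    by_cases hj : (j:ℕ) < p
    · have he : (fun i => Dbar i j) = fun i => D i j := by
        funext i; rw [hDbar]; simp [hj]
      rw [he]; exact ⟨hD1U j hj, hDnorm j⟩
    · have he : (fun i => Dbar i j) = fun i => D i pidx := by
        funext i; rw [hDbar]; simp [hj]
      rw [he]; exact ⟨hD1U pidx hppidx, hDnorm pidx⟩
  · funext i
    have hx' : x i = ∑ j, D i j * α j := by
      rw [← hDα]; rfl
    show ∑ j, Dbar i j * abar j = x i
    rw [hx', hsplit, hsplit]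
    have hSsum : ∑ j ∈ S, Dbar i j * abar j = ∑ j ∈ S, D i j * α j := by
      apply Finset.sum_congr rfl
      intro j hj
      simp only [hS, Finset.mem_filter] at hj
      rw [hDbar, habar, if_pos hj.2, if_pos (by omega)]
    have hTsum1 : ∑ j ∈ T, D i j * α j = D i pidx * α pidx := by
      apply Finset.sum_eq_single_of_mem pidx hpidxT
      intro b hb hne
      rw [hα0 b (hTeq b hb hne), mul_zero]
    have hTsum2 : ∑ j ∈ T, Dbar i j * abar j = D i pidx * α pidx := by
      have hconst : ∀ j ∈ T, Dbar i j * abar j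
          = D i pidx * (α pidx / ((dh - p + 1 : ℕ) : ℝ)) := by
        intro j hj
        simp only [hT, Finset.mem_filter] at hj
        rw [hDbar, habar, if_neg hj.2]
        by_cases hjp : (j:ℕ) < p
        · have : j = pidx := Fin.ext (by omega)
          rw [if_pos hjp, this]
        · rw [if_neg hjp]
      rw [Finset.sum_congr rfl hconst, Finset.sum_const, hTcard, nsmul_eq_mul]
      field_simp
    rw [hSsum, hTsum1, hTsum2]
  · have habar2 : ∑ j, abar j ^ 2
        = ∑ j ∈ S, α j ^ 2 + ((dh - p + 1 : ℕ) : ℝ) * (α pidx / ((dh - p + 1 : ℕ) : ℝ)) ^ 2 := by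
      rw [hsplit]
      congr 1
      · apply Finset.sum_congr rfl
        intro j hj
        simp only [hS, Finset.mem_filter] at hj
        rw [habar, if_pos hj.2]
      · have hconst : ∀ j ∈ T, abar j ^ 2 = (α pidx / ((dh - p + 1 : ℕ) : ℝ)) ^ 2 := by
          intro j hj
          simp only [hT, Finset.mem_filter] at hj
          rw [habar, if_neg hj.2]
        rw [Finset.sum_congr rfl hconst, Finset.sum_const, hTcard, nsmul_eq_mul]
    have halpha2 : ∑ j, α j ^ 2 = ∑ j ∈ S, α j ^ 2 + α pidx ^ 2 := by
      rw [hsplit]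
      congr 1
      apply Finset.sum_eq_single_of_mem pidx hpidxT
      intro b hb hne
      rw [hα0 b (hTeq b hb hne)]
      ring
    have hkey : ((dh - p + 1 : ℕ) : ℝ) * (α pidx / ((dh - p + 1 : ℕ) : ℝ)) ^ 2 < α pidx ^ 2 := by
      have happ : (0:ℝ) < α pidx ^ 2 := by positivity
      have he : ((dh - p + 1 : ℕ) : ℝ) * (α pidx / ((dh - p + 1 : ℕ) : ℝ)) ^ 2
          = α pidx ^ 2 / ((dh - p + 1 : ℕ) : ℝ) := by
        field_simp
      rw [he, div_lt_iff₀ hkR0]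
      nlinarith
    unfold vnorm
    apply Real.sqrt_lt_sqrt (by positivity)
    rw [habar2, halpha2]
    linarith
end

section
/- Let Y ∈ ℝ^{m×n}, D ∈ ℝ^{m×p}, λ > 0, and define F(C) = ½‖Y − DC‖_F² + λ‖C‖_{2,1} for C ∈ ℝ^{p×n}. Let C_0, C_1 ∈ ℝ^{p×n}, let τ_0 > 0 and τ_1 ≥ ‖D‖_2², let 0 ≤ δ < 1, and let η = δ·√(τ_0/τ_1) (or η = 0). Set Ĉ = C_1 + η(C_1 − C_0), G = −Dᵀ(Y − DĈ), and let C_2 ∈ ℝ^{p×n} be obtained by applying the soft-thresholding operator Θ_{λ/τ_1} to each column of Ĉ − G/τ_1. Then F(C_1) − F(C_2) ≥ (τ_1/2)‖C_1 − C_2‖_F² − (τ_0 δ²/2)‖C_0 − C_1‖_F². -/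
open Matrix Finset

noncomputable def frob {a b : ℕ} (A : Matrix (Fin a) (Fin b) ℝ) : ℝ :=
  Real.sqrt (∑ i, ∑ j, A i j ^ 2)

/-- `‖A‖_{2,1}`: the sum of the Euclidean norms of the columns of `A`. -/
noncomputable def norm21 {a b : ℕ} (A : Matrix (Fin a) (Fin b) ℝ) : ℝ :=
  ∑ j, vnorm (fun i => A i j)

/-- Spectral norm (largest singular value) of a real matrix. -/
noncomputable def specNorm {α β : Type*} [Fintype α] [Fintype β] [DecidableEq β]
    (A : Matrix α β ℝ) : ℝ :=
  ‖LinearMap.toContinuousLinearMap (Matrix.toEuclideanLin A)‖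

/-- Soft-thresholding operator on vectors. -/
noncomputable def softThresh {p : ℕ} (u : ℝ) (v : Fin p → ℝ) : Fin p → ℝ :=
  if u < vnorm v then fun i => ((vnorm v - u) / vnorm v) * v i else 0

/-- Column-wise soft thresholding of a matrix. -/
noncomputable def softThreshCols {a b : ℕ} (u : ℝ) (A : Matrix (Fin a) (Fin b) ℝ) :
    Matrix (Fin a) (Fin b) ℝ :=
  Matrix.of fun r i => softThresh u (fun r' => A r' i) r

namespace ProxAux

def dot {k : ℕ} (u v : Fin k → ℝ) : ℝ := ∑ i, u i * v i

lemma vnorm_nonneg {k : ℕ} (v : Fin k → ℝ) : 0 ≤ vnorm v := Real.sqrt_nonneg _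

lemma vnorm_sq {k : ℕ} (v : Fin k → ℝ) : vnorm v ^ 2 = ∑ i, v i ^ 2 := by
  rw [vnorm, Real.sq_sqrt (by positivity)]

lemma cauchy {k : ℕ} (u v : Fin k → ℝ) : dot u v ≤ vnorm u * vnorm v := by
  simpa [dot, vnorm] using Real.sum_mul_le_sqrt_mul_sqrt Finset.univ u v

lemma vnorm_smul {k : ℕ} (s : ℝ) (v : Fin k → ℝ) :
    vnorm (fun i => s * v i) = |s| * vnorm v := by
  rw [vnorm, vnorm, ← Real.sqrt_sq_eq_abs, ← Real.sqrt_mul (sq_nonneg s), Finset.mul_sum]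
  congr 1
  exact Finset.sum_congr rfl fun i _ => by ring

lemma softThresh_zero {k : ℕ} (v : Fin k → ℝ) : softThresh 0 v = v := by
  unfold softThresh
  split_ifs with h
  · funext i
    rw [sub_zero, div_self (ne_of_gt h), one_mul]
  · have h0 : vnorm v = 0 := le_antisymm (not_lt.mp h) (vnorm_nonneg v)
    have hsum : ∑ i, v i ^ 2 = 0 := by
      have := Real.sqrt_eq_zero (by positivity : (0:ℝ) ≤ ∑ i, v i ^ 2)
      rw [vnorm] at h0
      exact this.mp h0
    funext i
    have := (Finset.sum_eq_zero_iff_of_nonneg (fun i _ => sq_nonneg (v i))).mp hsum i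
      (Finset.mem_univ i)
    have : v i = 0 := by nlinarith [this]
    simp [this]

/-- Key variational inequality for the soft-thresholding operator. -/
lemma prox_key {k : ℕ} (u : ℝ) (hu : 0 < u) (z w : Fin k → ℝ) :
    u * vnorm (softThresh u z) + dot (softThresh u z - w) (softThresh u z - z)
      ≤ u * vnorm w := by
  set t := vnorm z with ht
  have htn : 0 ≤ t := vnorm_nonneg z
  have hwn : 0 ≤ vnorm w := vnorm_nonneg w
  have hcs : dot w z ≤ vnorm w * t := cauchy w z
  by_cases h : u < t
  · have ht0 : 0 < t := lt_trans hu h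
    have hc : softThresh u z = fun i => ((t - u) / t) * z i := by
      rw [softThresh, if_pos h]
    set s : ℝ := (t - u) / t with hs
    have hst : s * t = t - u := div_mul_cancel₀ _ (ne_of_gt ht0)
    have hvc : vnorm (softThresh u z) = t - u := by
      rw [hc, vnorm_smul, abs_of_nonneg (div_nonneg (by linarith) htn), hst]
    have hdzz : dot z z = t ^ 2 := by
      rw [ht, vnorm_sq]
      exact Finset.sum_congr rfl fun i _ => (sq (z i)).symm
    have hdot : dot (softThresh u z - w) (softThresh u z - z)
        = (s - 1) * (s * dot z z) - (s - 1) * dot w z := by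
      rw [hc]
      simp only [dot, Pi.sub_apply, Finset.mul_sum, ← Finset.sum_sub_distrib]
      exact Finset.sum_congr rfl fun i _ => by ring
    have hs1 : s - 1 = -(u / t) := by
      rw [hs]; field_simp; ring
    have hterm : (s - 1) * (s * dot z z) = -(u * (t - u)) := by
      rw [hdzz, hs1]
      have : s * t ^ 2 = (t - u) * t := by rw [sq, ← mul_assoc, hst]
      rw [this]
      field_simp
    have hkey2 : (u / t) * dot w z ≤ u * vnorm w := by
      calc (u / t) * dot w z ≤ (u / t) * (vnorm w * t) := by
            apply mul_le_mul_of_nonneg_left hcs (le_of_lt (div_pos hu ht0))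
        _ = u * vnorm w := by field_simp
    rw [hvc, hdot, hterm, hs1]
    linarith
  · have hc : softThresh u z = 0 := by rw [softThresh, if_neg h]
    have hvz : vnorm (0 : Fin k → ℝ) = 0 := by simp [vnorm]
    have hdot : dot ((0 : Fin k → ℝ) - w) ((0 : Fin k → ℝ) - z) = dot w z := by
      simp only [dot, Pi.sub_apply, Pi.zero_apply]
      exact Finset.sum_congr rfl fun i _ => by ring
    rw [hc, hdot, hvz, mul_zero, zero_add]
    have hzt : t ≤ u := not_lt.mp h
    nlinarith

/-- Expansion of `‖c - (chat - r•g)‖²`. -/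
lemma zexp {k : ℕ} (c chat g : Fin k → ℝ) (r : ℝ) :
    vnorm (c - (chat - r • g)) ^ 2
      = vnorm (c - chat) ^ 2 + 2 * r * dot (c - chat) g + r ^ 2 * vnorm g ^ 2 := by
  simp only [vnorm_sq, dot, Pi.sub_apply, Pi.smul_apply, smul_eq_mul, Finset.mul_sum,
    ← Finset.sum_add_distrib]
  exact Finset.sum_congr rfl fun i _ => by ring

/-- Expansion of `‖w - z‖²` around a third point. -/
lemma sq_expand3 {k : ℕ} (w z c : Fin k → ℝ) :
    vnorm (w - z) ^ 2
      = vnorm (w - c) ^ 2 + 2 * dot (w - c) (c - z) + vnorm (c - z) ^ 2 := by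
  simp only [vnorm_sq, dot, Pi.sub_apply, Finset.mul_sum, ← Finset.sum_add_distrib]
  exact Finset.sum_congr rfl fun i _ => by ring

/-- Strong-convexity inequality for the prox step. -/
lemma prox_ineq {k : ℕ} (u : ℝ) (hu : 0 < u) (z w : Fin k → ℝ) :
    u * vnorm (softThresh u z) + (1/2) * vnorm (softThresh u z - z) ^ 2
        + (1/2) * vnorm (w - softThresh u z) ^ 2
      ≤ u * vnorm w + (1/2) * vnorm (w - z) ^ 2 := by
  have key := prox_key u hu z w
  have exp := sq_expand3 w z (softThresh u z)
  have hneg : dot (softThresh u z - w) (softThresh u z - z)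
      = - dot (w - softThresh u z) (softThresh u z - z) := by
    simp only [dot, Pi.sub_apply, ← Finset.sum_neg_distrib]
    exact Finset.sum_congr rfl fun i _ => by ring
  rw [hneg] at key
  linarith

lemma vnorm_euclid {k : ℕ} (v : Fin k → ℝ) :
    ‖(WithLp.equiv 2 (Fin k → ℝ)).symm v‖ = vnorm v := by
  rw [EuclideanSpace.norm_eq, vnorm]
  congr 1
  exact Finset.sum_congr rfl fun i _ => by
    rw [Real.norm_eq_abs, sq_abs]; rfl

lemma spec_bound {m p : ℕ} (D : Matrix (Fin m) (Fin p) ℝ) (x : Fin p → ℝ) :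
    vnorm (D.mulVec x) ^ 2 ≤ specNorm D ^ 2 * vnorm x ^ 2 := by
  have h := (LinearMap.toContinuousLinearMap (Matrix.toEuclideanLin D)).le_opNorm
    ((WithLp.equiv 2 (Fin p → ℝ)).symm x)
  rw [LinearMap.coe_toContinuousLinearMap'] at h
  change ‖(WithLp.equiv 2 (Fin m → ℝ)).symm (D *ᵥ x)‖ ≤ _ * _ at h
  rw [vnorm_euclid, vnorm_euclid] at h
  rw [← mul_pow]
  exact pow_le_pow_left₀ (vnorm_nonneg _) h 2

lemma dot_mulVec {m p : ℕ} (D : Matrix (Fin m) (Fin p) ℝ) (x : Fin p → ℝ) (a : Fin m → ℝ) :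
    dot (D.mulVec x) a = dot x (Dᵀ.mulVec a) := by
  simp only [dot, Matrix.mulVec, dotProduct, Matrix.transpose_apply,
    Finset.sum_mul, Finset.mul_sum]
  rw [Finset.sum_comm]
  exact Finset.sum_congr rfl fun i _ => Finset.sum_congr rfl fun j _ => by ring

/-- Quadratic expansion of the least-squares term around `chat`, per column. -/
lemma quad_expand {m p : ℕ} (y : Fin m → ℝ) (D : Matrix (Fin m) (Fin p) ℝ)
    (chat c : Fin p → ℝ) :
    vnorm (y - D.mulVec c) ^ 2
      = vnorm (y - D.mulVec chat) ^ 2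
        - 2 * dot (c - chat) (Dᵀ.mulVec (y - D.mulVec chat))
        + vnorm (D.mulVec (c - chat)) ^ 2 := by
  have hsub : y - D.mulVec c = (y - D.mulVec chat) - D.mulVec (c - chat) := by
    rw [Matrix.mulVec_sub]; abel
  have hdotab : dot (D.mulVec (c - chat)) (y - D.mulVec chat)
      = dot (c - chat) (Dᵀ.mulVec (y - D.mulVec chat)) := dot_mulVec D _ _
  rw [hsub, ← hdotab]
  simp only [vnorm_sq, dot, Pi.sub_apply, Finset.mul_sum, ← Finset.sum_sub_distrib,
    ← Finset.sum_add_distrib]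
  exact Finset.sum_congr rfl fun i _ => by ring

/-- Per-column sufficient decrease. -/
lemma col_decrease {m p : ℕ} (y : Fin m → ℝ) (D : Matrix (Fin m) (Fin p) ℝ)
    (lam τ1 : ℝ) (hlam : 0 < lam) (hτ1 : 0 < τ1) (hspec : specNorm D ^ 2 ≤ τ1)
    (chat c1 g c2 : Fin p → ℝ)
    (hg : g = fun i => -(Dᵀ.mulVec (y - D.mulVec chat)) i)
    (hc2 : c2 = softThresh (lam / τ1) (chat - τ1⁻¹ • g)) :
    (vnorm (y - D.mulVec c1) ^ 2 / 2 + lam * vnorm c1)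
      - (vnorm (y - D.mulVec c2) ^ 2 / 2 + lam * vnorm c2)
    ≥ τ1 / 2 * vnorm (c1 - c2) ^ 2 - τ1 / 2 * vnorm (c1 - chat) ^ 2 := by
  have hτ1ne : τ1 ≠ 0 := ne_of_gt hτ1
  have hu : 0 < lam / τ1 := div_pos hlam hτ1
  have prox := prox_ineq (lam / τ1) hu (chat - τ1⁻¹ • g) c1
  rw [← hc2] at prox
  have prox2 : lam * vnorm c2 + τ1 / 2 * vnorm (c2 - (chat - τ1⁻¹ • g)) ^ 2
      + τ1 / 2 * vnorm (c1 - c2) ^ 2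
      ≤ lam * vnorm c1 + τ1 / 2 * vnorm (c1 - (chat - τ1⁻¹ • g)) ^ 2 := by
    calc lam * vnorm c2 + τ1 / 2 * vnorm (c2 - (chat - τ1⁻¹ • g)) ^ 2
          + τ1 / 2 * vnorm (c1 - c2) ^ 2
        = τ1 * (lam / τ1 * vnorm c2 + (1/2) * vnorm (c2 - (chat - τ1⁻¹ • g)) ^ 2
            + (1/2) * vnorm (c1 - c2) ^ 2) := by field_simp
      _ ≤ τ1 * (lam / τ1 * vnorm c1 + (1/2) * vnorm (c1 - (chat - τ1⁻¹ • g)) ^ 2) :=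
          mul_le_mul_of_nonneg_left prox hτ1.le
      _ = lam * vnorm c1 + τ1 / 2 * vnorm (c1 - (chat - τ1⁻¹ • g)) ^ 2 := by
          field_simp
  have hz1 : τ1 / 2 * vnorm (c1 - (chat - τ1⁻¹ • g)) ^ 2
      = τ1 / 2 * vnorm (c1 - chat) ^ 2 + dot (c1 - chat) g + vnorm g ^ 2 / (2 * τ1) := by
    rw [zexp]; field_simp
  have hz2 : τ1 / 2 * vnorm (c2 - (chat - τ1⁻¹ • g)) ^ 2
      = τ1 / 2 * vnorm (c2 - chat) ^ 2 + dot (c2 - chat) g + vnorm g ^ 2 / (2 * τ1) := by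
    rw [zexp]; field_simp
  rw [hz1, hz2] at prox2
  have hgdot : ∀ c : Fin p → ℝ, dot c g = - dot c (Dᵀ.mulVec (y - D.mulVec chat)) := by
    intro c
    rw [hg]
    simp only [dot, ← Finset.sum_neg_distrib]
    exact Finset.sum_congr rfl fun i _ => by ring
  rw [hgdot, hgdot] at prox2
  have q1 := quad_expand y D chat c1
  have q2 := quad_expand y D chat c2
  have s2 : vnorm (D.mulVec (c2 - chat)) ^ 2 ≤ τ1 * vnorm (c2 - chat) ^ 2 := by
    have := spec_bound D (c2 - chat)
    nlinarith [vnorm_sq (c2 - chat), Finset.sum_nonneg (fun i (_ : i ∈ Finset.univ) =>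
      sq_nonneg ((c2 - chat) i))]
  have s1 : 0 ≤ vnorm (D.mulVec (c1 - chat)) ^ 2 := sq_nonneg _
  linarith

lemma frob_sq_cols {a b : ℕ} (A : Matrix (Fin a) (Fin b) ℝ) :
    frob A ^ 2 = ∑ j, vnorm (fun i => A i j) ^ 2 := by
  rw [frob, Real.sq_sqrt (by positivity), Finset.sum_comm]
  exact Finset.sum_congr rfl fun j _ => (vnorm_sq _).symm

end ProxAux

open ProxAux

/-- Sufficient decrease of one extrapolated proximal-gradient step on
`F(C) = ½‖Y − DC‖_F² + λ‖C‖_{2,1}`: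
`F(C₁) − F(C₂) ≥ (τ₁/2)‖C₁ − C₂‖_F² − (τ₀δ²/2)‖C₀ − C₁‖_F²`. -/
theorem prox_gradient_extrapolated_decrease
    (m n p : ℕ)
    (Y : Matrix (Fin m) (Fin n) ℝ) (D : Matrix (Fin m) (Fin p) ℝ)
    (lam : ℝ) (hlam : 0 < lam)
    (C0 C1 : Matrix (Fin p) (Fin n) ℝ)
    (τ0 τ1 δ η : ℝ)
    (hτ0 : 0 < τ0) (hτ1 : specNorm D ^ 2 ≤ τ1)
    (hδ0 : 0 ≤ δ) (hδ1 : δ < 1)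
    (hη : η = δ * Real.sqrt (τ0 / τ1) ∨ η = 0)
    (Chat : Matrix (Fin p) (Fin n) ℝ) (hChat : Chat = C1 + η • (C1 - C0))
    (G : Matrix (Fin p) (Fin n) ℝ) (hG : G = -(Dᵀ * (Y - D * Chat)))
    (C2 : Matrix (Fin p) (Fin n) ℝ)
    (hC2 : C2 = softThreshCols (lam / τ1) (Chat - τ1⁻¹ • G))
    (F : Matrix (Fin p) (Fin n) ℝ → ℝ)
    (hF : ∀ C, F C = frob (Y - D * C) ^ 2 / 2 + lam * norm21 C) :
    F C1 - F C2 ≥ τ1 / 2 * frob (C1 - C2) ^ 2 - τ0 * δ ^ 2 / 2 * frob (C0 - C1) ^ 2 := by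
  have hτ1nn : (0:ℝ) ≤ τ1 := le_trans (sq_nonneg _) hτ1
  rcases eq_or_lt_of_le hτ1nn with hτ1z | hτ1pos
  · -- degenerate case τ1 = 0
    have hτ1z : τ1 = 0 := hτ1z.symm
    subst hτ1z
    have hη0 : η = 0 := by
      rcases hη with h | h
      · rw [h]; simp
      · exact h
    have hChat1 : Chat = C1 := by rw [hChat, hη0, zero_smul, add_zero]
    have hC21 : C2 = C1 := by
      have hGz : (0:ℝ)⁻¹ • G = 0 := by rw [_root_.inv_zero]; exact zero_smul _ _
      rw [hC2, hGz, sub_zero, hChat1]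
      funext r j
      simp only [softThreshCols, Matrix.of_apply, div_zero]
      rw [softThresh_zero]
    rw [hC21, sub_self]
    have h1 : (0:ℝ) ≤ τ0 * δ ^ 2 / 2 * frob (C0 - C1) ^ 2 := by positivity
    rw [sub_self, frob, show (∑ i, ∑ j, (0:Matrix (Fin p) (Fin n) ℝ) i j ^ 2) = 0 by simp]
    simp only [Real.sqrt_zero]
    nlinarith
  · -- main case 0 < τ1
    have hτ1ne : τ1 ≠ 0 := ne_of_gt hτ1pos
    -- bound on τ1 * η ^ 2
    have hηsq : τ1 * η ^ 2 ≤ τ0 * δ ^ 2 := by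
      rcases hη with h | h
      · rw [h, mul_pow, Real.sq_sqrt (by positivity)]
        rw [show τ1 * (δ ^ 2 * (τ0 / τ1)) = δ ^ 2 * τ0 * (τ1 / τ1) by ring,
          div_self hτ1ne, mul_one]
        linarith [le_of_eq (rfl : δ ^ 2 * τ0 = δ ^ 2 * τ0)]
      · rw [h]; nlinarith
    -- column functions
    set c0 : Fin n → Fin p → ℝ := fun j k => C0 k j with hc0
    set c1 : Fin n → Fin p → ℝ := fun j k => C1 k j with hc1
    set c2 : Fin n → Fin p → ℝ := fun j k => C2 k j with hc2c
    set chat : Fin n → Fin p → ℝ := fun j k => Chat k j with hchat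
    set g : Fin n → Fin p → ℝ := fun j k => G k j with hgc
    set y : Fin n → Fin m → ℝ := fun j i => Y i j with hy
    -- column of a product
    have hcolmul : ∀ (C : Matrix (Fin p) (Fin n) ℝ) (j : Fin n),
        (fun i => (Y - D * C) i j) = y j - D.mulVec (fun k => C k j) := by
      intro C j
      funext i
      simp [Matrix.sub_apply, Matrix.mul_apply, Matrix.mulVec, dotProduct, hy]
    -- per-column data identities
    have hgcol : ∀ j, g j = fun k => -(Dᵀ.mulVec (y j - D.mulVec (chat j)) k) := by
      intro j
      funext k
      rw [hgc]
      simp only [hG, Matrix.neg_apply]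
      congr 1
    have hc2col : ∀ j, c2 j = softThresh (lam / τ1) (chat j - τ1⁻¹ • g j) := by
      intro j
      funext k
      rw [hc2c]
      simp only [hC2, softThreshCols, Matrix.of_apply]
      congr 1
    -- per-column inequality
    have hcol : ∀ j, (vnorm (y j - D.mulVec (c1 j)) ^ 2 / 2 + lam * vnorm (c1 j))
        - (vnorm (y j - D.mulVec (c2 j)) ^ 2 / 2 + lam * vnorm (c2 j))
        ≥ τ1 / 2 * vnorm (c1 j - c2 j) ^ 2 - τ1 / 2 * vnorm (c1 j - chat j) ^ 2 := by
      intro j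
      exact col_decrease (y j) D lam τ1 hlam hτ1pos hτ1 (chat j) (c1 j) (g j) (c2 j)
        (by simpa using hgcol j) (hc2col j)
    -- F in column form
    have hFcol : ∀ C, F C = ∑ j, (vnorm (y j - D.mulVec (fun k => C k j)) ^ 2 / 2
        + lam * vnorm (fun k => C k j)) := by
      intro C
      rw [hF, norm21, frob_sq_cols, Finset.sum_div, Finset.mul_sum,
        ← Finset.sum_add_distrib]
      exact Finset.sum_congr rfl fun j _ => by rw [hcolmul C j]
    -- extrapolation identity per column
    have hchat_diff : ∀ j, vnorm (c1 j - chat j) ^ 2 = η ^ 2 * vnorm (c0 j - c1 j) ^ 2 := by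
      intro j
      have : c1 j - chat j = fun k => η * ((c0 j - c1 j) k) := by
        funext k
        simp [hc1, hchat, hc0, hChat, Matrix.add_apply, Matrix.smul_apply, Matrix.sub_apply]
        ring
      rw [this, vnorm_smul, mul_pow, sq_abs]
    -- sum up
    have hsum : F C1 - F C2 ≥ ∑ j, (τ1 / 2 * vnorm (c1 j - c2 j) ^ 2
        - τ1 / 2 * η ^ 2 * vnorm (c0 j - c1 j) ^ 2) := by
      rw [hFcol C1, hFcol C2, ← Finset.sum_sub_distrib]
      apply Finset.sum_le_sum
      intro j _
      have := hcol j
      rw [hchat_diff j] at this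
      calc τ1 / 2 * vnorm (c1 j - c2 j) ^ 2 - τ1 / 2 * η ^ 2 * vnorm (c0 j - c1 j) ^ 2
          = τ1 / 2 * vnorm (c1 j - c2 j) ^ 2 - τ1 / 2 * (η ^ 2 * vnorm (c0 j - c1 j) ^ 2) := by
            ring
        _ ≤ _ := this
    -- identify the sums with Frobenius norms
    have hfrob12 : ∑ j, vnorm (c1 j - c2 j) ^ 2 = frob (C1 - C2) ^ 2 := by
      rw [frob_sq_cols]
      exact Finset.sum_congr rfl fun j _ => by congr 1
    have hfrob01 : ∑ j, vnorm (c0 j - c1 j) ^ 2 = frob (C0 - C1) ^ 2 := by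
      rw [frob_sq_cols]
      exact Finset.sum_congr rfl fun j _ => by congr 1
    have hsum2 : ∑ j, (τ1 / 2 * vnorm (c1 j - c2 j) ^ 2
        - τ1 / 2 * η ^ 2 * vnorm (c0 j - c1 j) ^ 2)
        = τ1 / 2 * frob (C1 - C2) ^ 2 - τ1 / 2 * η ^ 2 * frob (C0 - C1) ^ 2 := by
      rw [Finset.sum_sub_distrib, ← Finset.mul_sum, ← Finset.mul_sum, hfrob12, hfrob01]
    rw [hsum2] at hsum
    have hfrob01nn : 0 ≤ frob (C0 - C1) ^ 2 := sq_nonneg _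
    nlinarith [hsum, hηsq, hfrob01nn]
end

section
/- Let (F_t)_{t≥0} be a real sequence bounded below, let (x_t)_{t≥1} and (b_t)_{t≥1} be nonnegative real sequences with x_0 = 0, let (α_t)_{t≥0} satisfy α_t ≥ τ̄ for some τ̄ > 0, and let 0 ≤ δ < 1. Suppose that for every t ≥ 1: F_{t−1} − F_t ≥ (α_t/2)·x_t − (δ²α_{t−1}/2)·x_{t−1} + b_t. Then Σ_{t≥1} x_t < ∞ and Σ_{t≥1} b_t < ∞; in particular x_t → 0, b_t → 0, and F_{t−1} − F_t → 0 as t → ∞. -/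
open Filter Topology

/-- Abstract descent-sequence lemma: if `F` is bounded below and
`F_{t−1} − F_t ≥ (α_t/2)x_t − (δ²α_{t−1}/2)x_{t−1} + b_t` with `x, b ≥ 0`, `x_0 = 0`,
`α_t ≥ τ̄ > 0` and `0 ≤ δ < 1`, then `Σ x_t < ∞`, `Σ b_t < ∞`, `x_t → 0`, `b_t → 0`,
and `F_{t−1} − F_t → 0`. -/
theorem descent_sequence_summable
    (F x b α : ℕ → ℝ) (τbar δ : ℝ)
    (hbdd : ∃ M : ℝ, ∀ t, M ≤ F t)
    (hx : ∀ t, 0 ≤ x t) (hb : ∀ t, 0 ≤ b t) (hx0 : x 0 = 0)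
    (hτ : 0 < τbar) (hα : ∀ t, τbar ≤ α t)
    (hδ0 : 0 ≤ δ) (hδ1 : δ < 1)
    (hrec : ∀ t : ℕ, 1 ≤ t →
        F (t - 1) - F t ≥ α t / 2 * x t - δ ^ 2 * α (t - 1) / 2 * x (t - 1) + b t) :
    Summable x ∧ Summable b ∧
    Tendsto x atTop (𝓝 0) ∧ Tendsto b atTop (𝓝 0) ∧
    Tendsto (fun t => F t - F (t + 1)) atTop (𝓝 0) := by
  obtain ⟨M, hM⟩ := hbdd
  set c : ℕ → ℝ := fun t => α t / 2 * x t with hcdef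
  have hc0 : c 0 = 0 := by simp [hcdef, hx0]
  have hcpos : ∀ t, 0 ≤ c t := fun t =>
    mul_nonneg (by linarith [hα t]) (hx t)
  have hδ2 : δ ^ 2 < 1 := by nlinarith
  have hδ2' : 0 ≤ δ ^ 2 := sq_nonneg δ
  have hrec' : ∀ i : ℕ, c (i + 1) - δ ^ 2 * c i + b (i + 1) ≤ F i - F (i + 1) := by
    intro i
    have h := hrec (i + 1) (Nat.le_add_left 1 i)
    simp only [Nat.add_sub_cancel] at h
    show α (i + 1) / 2 * x (i + 1) - δ ^ 2 * (α i / 2 * x i) + b (i + 1) ≤ F i - F (i + 1)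
    linarith [h]
  -- shift inequality for partial sums of c
  have h2 : ∀ n, ∑ i ∈ Finset.range n, c i ≤ ∑ i ∈ Finset.range n, c (i + 1) := by
    intro n
    have htel : ∑ i ∈ Finset.range n, (c (i + 1) - c i) = c n - c 0 :=
      Finset.sum_range_sub c n
    rw [Finset.sum_sub_distrib] at htel
    have := hcpos n
    linarith [htel, hc0]
  -- lower bound on partial sums of d
  have hdlow : ∀ n, 0 ≤ ∑ i ∈ Finset.range n, (c (i + 1) - δ ^ 2 * c i + b (i + 1)) := by
    intro n
    have : ∑ i ∈ Finset.range n, (c (i + 1) - δ ^ 2 * c i + b (i + 1)) =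
        (∑ i ∈ Finset.range n, c (i + 1)) - δ ^ 2 * (∑ i ∈ Finset.range n, c i)
          + ∑ i ∈ Finset.range n, b (i + 1) := by
      rw [Finset.sum_add_distrib, Finset.sum_sub_distrib, Finset.mul_sum]
    rw [this]
    have hbn : 0 ≤ ∑ i ∈ Finset.range n, b (i + 1) :=
      Finset.sum_nonneg fun i _ => hb _
    have hcn : 0 ≤ ∑ i ∈ Finset.range n, c (i + 1) :=
      Finset.sum_nonneg fun i _ => hcpos _
    nlinarith [h2 n, mul_le_mul_of_nonneg_left (h2 n) hδ2']
  -- telescoped upper bound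
  have hdup : ∀ n, ∑ i ∈ Finset.range n, (c (i + 1) - δ ^ 2 * c i + b (i + 1)) ≤ F 0 - M := by
    intro n
    have htel : ∑ i ∈ Finset.range n, (F i - F (i + 1)) = F 0 - F n :=
      Finset.sum_range_sub' F n
    have h1 : ∑ i ∈ Finset.range n, (c (i + 1) - δ ^ 2 * c i + b (i + 1)) ≤ F 0 - F n := by
      rw [← htel]; exact Finset.sum_le_sum fun i _ => hrec' i
    linarith [hM n]
  -- master summable series
  have key : ∀ n, ∑ i ∈ Finset.range n, ((1 - δ ^ 2) * c (i + 1) + b (i + 1)) ≤ F 0 - M := by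
    intro n
    have heq : ∑ i ∈ Finset.range n, ((1 - δ ^ 2) * c (i + 1) + b (i + 1)) =
        (1 - δ ^ 2) * (∑ i ∈ Finset.range n, c (i + 1))
          + ∑ i ∈ Finset.range n, b (i + 1) := by
      rw [Finset.sum_add_distrib, ← Finset.mul_sum]
    have heq' : ∑ i ∈ Finset.range n, (c (i + 1) - δ ^ 2 * c i + b (i + 1)) =
        (∑ i ∈ Finset.range n, c (i + 1)) - δ ^ 2 * (∑ i ∈ Finset.range n, c i)
          + ∑ i ∈ Finset.range n, b (i + 1) := by
      rw [Finset.sum_add_distrib, Finset.sum_sub_distrib, Finset.mul_sum]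
    have := hdup n
    rw [heq'] at this
    rw [heq]
    nlinarith [mul_le_mul_of_nonneg_left (h2 n) hδ2']
  have hu : Summable (fun t => (1 - δ ^ 2) * c (t + 1) + b (t + 1)) :=
    summable_of_sum_range_le
      (fun n => add_nonneg (mul_nonneg (by linarith) (hcpos _)) (hb _)) key
  have hsc1' : Summable (fun t => (1 - δ ^ 2) * c (t + 1)) :=
    hu.of_nonneg_of_le (fun t => mul_nonneg (by linarith) (hcpos _))
      (fun t => le_add_of_nonneg_right (hb _))
  have hne : (1 - δ ^ 2) ≠ 0 := by linarith
  have hsc1 : Summable (fun t => c (t + 1)) := by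
    have := hsc1'.mul_left (1 - δ ^ 2)⁻¹
    simpa [← mul_assoc, inv_mul_cancel₀ hne] using this
  have hsc : Summable c := (summable_nat_add_iff 1).mp hsc1
  have hsb1 : Summable (fun t => b (t + 1)) :=
    hu.of_nonneg_of_le (fun t => hb _)
      (fun t => le_add_of_nonneg_left (mul_nonneg (by linarith) (hcpos _)))
  have hsb : Summable b := (summable_nat_add_iff 1).mp hsb1
  have hsx : Summable x := by
    refine (hsc.mul_left (2 / τbar)).of_nonneg_of_le hx (fun t => ?_)
    have h1 : τbar / 2 * x t ≤ c t := by
      have := mul_le_mul_of_nonneg_right (hα t) (hx t)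
      simp only [hcdef]
      nlinarith
    have h2 : (2 / τbar) * (τbar / 2 * x t) = x t := by
      field_simp
    calc x t ≤ (2 / τbar) * (τbar / 2 * x t) := h2.ge
      _ ≤ (2 / τbar) * c t :=
        mul_le_mul_of_nonneg_left h1 (by positivity)
  -- last limit
  have hsd : Summable (fun t => c (t + 1) - δ ^ 2 * c t + b (t + 1)) :=
    (hsc1.sub (hsc.mul_left (δ ^ 2))).add hsb1
  have hse : Summable (fun t => (F t - F (t + 1)) - (c (t + 1) - δ ^ 2 * c t + b (t + 1))) := by
    apply summable_of_sum_range_le (c := F 0 - M)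
      (fun t => by linarith [hrec' t])
    intro n
    rw [Finset.sum_sub_distrib, Finset.sum_range_sub' F n]
    linarith [hdlow n, hM n]
  have hg : Tendsto (fun t => F t - F (t + 1)) atTop (𝓝 0) := by
    have := hse.tendsto_atTop_zero.add hsd.tendsto_atTop_zero
    simpa using this
  exact ⟨hsx, hsb, hsx.tendsto_atTop_zero, hsb.tendsto_atTop_zero, hg⟩
end

section
/- Let H be a real inner product space, let U ⊆ H be a convex set, let g : H → ℝ be convex and differentiable with gradient ∇g, let h : H → ℝ be convex, and set f = g + h. Let v ∈ U, L > 0, and let u* be a minimizer over u ∈ U of the function u ↦ ⟨∇g(v), u − v⟩ + (L/2)‖u − v‖² + h(u). If g(u*) ≤ g(v) + ⟨∇g(v), u* − v⟩ + (L/2)‖u* − v‖², then for every u ∈ U: f(u) − f(u*) ≥ (L/2)‖u* − v‖² + L⟨v − u, u* − v⟩. -/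
open scoped RealInnerProductSpace

/-- Gradient inequality for a convex differentiable function on all of `H`. -/
lemma my_grad_ineq {H : Type*} [NormedAddCommGroup H] [InnerProductSpace ℝ H]
    (g : H → ℝ) (hg : ConvexOn ℝ Set.univ g) (g' : H → H)
    (hg' : ∀ x : H, HasFDerivAt g (innerSL ℝ (g' x)) x) (x y : H) :
    g x + ⟪g' x, y - x⟫ ≤ g y := by
  set φ : ℝ → ℝ := fun t => g (x + t • (y - x)) with hφ
  have hconv : ConvexOn ℝ Set.univ φ := by
    have := hg.comp_affineMap (AffineMap.lineMap x y : ℝ →ᵃ[ℝ] H)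
    simp only [Set.preimage_univ] at this
    have heq : φ = g ∘ AffineMap.lineMap x y := by
      funext t
      simp [φ, AffineMap.lineMap_apply, add_comm]
    rw [heq]; exact this
  have hline : HasDerivAt (fun t : ℝ => x + t • (y - x)) (y - x) 0 := by
    have := ((hasDerivAt_id (0:ℝ)).smul_const (y - x)).const_add x
    simpa using this
  have hder : HasDerivAt φ ⟪g' x, y - x⟫ 0 := by
    have hx : HasFDerivAt g (innerSL ℝ (g' x)) (x + (0:ℝ) • (y - x)) := by
      simpa using hg' x
    have h1 := hx.comp_hasDerivAt (x := (0:ℝ)) hline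
    exact h1
  have hs := hconv.le_slope_of_hasDerivAt (Set.mem_univ 0) (Set.mem_univ 1)
    one_pos hder
  have : slope φ 0 1 = g y - g x := by
    simp [slope_def_field, φ]
  linarith [hs.trans_eq this]

/-- Lemma 2.1 of Xu–Yin: for `f = g + h` with `g` convex differentiable and `h` convex,
if `u*` minimizes the prox-linear surrogate at `v` over the convex set `U` and the
descent condition holds at `u*`, then for every `u ∈ U`,
`f(u) − f(u*) ≥ (L/2)‖u* − v‖² + L⟨v − u, u* − v⟩`. -/
theorem prox_linear_minimizer_bound
    {H : Type*} [NormedAddCommGroup H] [InnerProductSpace ℝ H]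
    (U : Set H) (hU : Convex ℝ U)
    (g h : H → ℝ)
    (hg : ConvexOn ℝ Set.univ g) (hh : ConvexOn ℝ Set.univ h)
    (g' : H → H) (hg' : ∀ x : H, HasFDerivAt g (innerSL ℝ (g' x)) x)
    (v : H) (hv : v ∈ U) (L : ℝ) (hL : 0 < L)
    (ustar : H) (hustar : ustar ∈ U)
    (hmin : ∀ u ∈ U,
        ⟪g' v, ustar - v⟫ + L / 2 * ‖ustar - v‖ ^ 2 + h ustar ≤
          ⟪g' v, u - v⟫ + L / 2 * ‖u - v‖ ^ 2 + h u)
    (hdesc : g ustar ≤ g v + ⟪g' v, ustar - v⟫ + L / 2 * ‖ustar - v‖ ^ 2) :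
    ∀ u ∈ U,
      (g u + h u) - (g ustar + h ustar) ≥
        L / 2 * ‖ustar - v‖ ^ 2 + L * ⟪v - u, ustar - v⟫ := by
  intro u hu
  set d : H := u - ustar with hd
  set w : H := ustar - v with hw
  -- variational inequality at the minimizer
  have hB : 0 ≤ ⟪g' v, d⟫ + (h u - h ustar) + L * ⟪w, d⟫ := by
    refine le_of_forall_pos_le_add ?_
    intro ε hε
    set C : ℝ := L / 2 * ‖d‖ ^ 2 with hC
    have hC0 : 0 ≤ C := by positivity
    set t : ℝ := min 1 (ε / (C + 1)) with ht
    have ht0 : 0 < t := lt_min one_pos (by positivity)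
    have ht1 : t ≤ 1 := min_le_left _ _
    have htε : t * C ≤ ε := by
      have h1 : t ≤ ε / (C + 1) := min_le_right _ _
      have h2 : t * (C + 1) ≤ ε := by
        rw [← le_div_iff₀ (by positivity)]
        exact h1
      nlinarith
    set ut : H := ustar + t • d with hut
    have hutU : ut ∈ U := by
      have := hU hustar hu (by linarith : (0:ℝ) ≤ 1 - t) ht0.le (by ring)
      convert this using 1
      simp only [hut, hd]
      module
    have hmin' := hmin ut hutU
    -- rewrite the pieces at ut
    have hsub : ut - v = w + t • d := by
      simp only [hut, hw]; abel
    have hinner : ⟪g' v, ut - v⟫ = ⟪g' v, w⟫ + t * ⟪g' v, d⟫ := by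
      rw [hsub, inner_add_right, real_inner_smul_right]
    have hnorm : ‖ut - v‖ ^ 2 = ‖w‖ ^ 2 + 2 * (t * ⟪w, d⟫) + t ^ 2 * ‖d‖ ^ 2 := by
      rw [hsub, norm_add_sq_real, real_inner_smul_right, norm_smul]
      rw [mul_pow]
      simp [abs_of_pos ht0]
    have hhut : h ut ≤ (1 - t) * h ustar + t * h u := by
      have := hh.2 (Set.mem_univ ustar) (Set.mem_univ u)
        (by linarith : (0:ℝ) ≤ 1 - t) ht0.le (by ring)
      have heq : (1 - t) • ustar + t • u = ut := by
        simp only [hut, hd]; module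
      rw [heq] at this
      simpa using this
    rw [hinner, hnorm] at hmin'
    -- combine and divide by t
    have key : 0 ≤ t * (⟪g' v, d⟫ + (h u - h ustar) + L * ⟪w, d⟫) + t ^ 2 * C := by
      nlinarith [hmin', hhut]
    have : 0 ≤ ⟪g' v, d⟫ + (h u - h ustar) + L * ⟪w, d⟫ + t * C := by
      nlinarith [key, ht0]
    linarith [htε]
  -- gradient inequality for g
  have hgrad : g v + ⟪g' v, u - v⟫ ≤ g u := my_grad_ineq g hg g' hg' v u
  have hsplit : ⟪g' v, u - v⟫ = ⟪g' v, d⟫ + ⟪g' v, w⟫ := by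
    rw [← inner_add_right]
    congr 1
    simp only [hd, hw]; abel
  have hvu : ⟪v - u, w⟫ = -‖w‖ ^ 2 - ⟪d, w⟫ := by
    have : v - u = -w - d := by simp only [hd, hw]; abel
    rw [this, inner_sub_left, inner_neg_left, real_inner_self_eq_norm_sq]
  rw [real_inner_comm d w] at hB
  rw [ge_iff_le, hvu]
  linarith [hB, hgrad, hdesc, hsplit.ge, hsplit.le]
end
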